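/- Let (γ,ν): I → ℝ² × S¹ be a Legendre curve with ν(t)=(a(t),b(t)) and curvature (ℓ,β). If a(t)ℓ(t) = 0 for all t ∈ I (i.e., the curvature function K^z_F of the surface of revolution around the z-axis vanishes identically), then ℓ(t) = 0 for all t ∈ I, ν is constant, and γ is a part of a line: (γ(t) − γ(t₀))·ν(t₀) = 0 for all t, t₀ ∈ I. -/

import Mathlib

/-- Let `(γ, ν)` be a Legendre curve with `γ = (x, z)`, `ν = (a, b)` and
curvature `(ℓ, β)`.  If `a(t) ℓ(t) = 0` for all `t` (i.e. the curvature `K^z_F = -aℓ` of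
the surface of revolution around the z-axis vanishes identically), then `ℓ ≡ 0`, `ν` is
constant, and `γ` is a part of a line: `(γ(t) - γ(t₀)) · ν(t₀) = 0` for all `t, t₀`. -/
theorem zero_Gauss_curvature_surface_of_revolution
    (x z a b ℓ β : ℝ → ℝ)
    (hx : ContDiff ℝ (⊤ : ℕ∞) x) (hz : ContDiff ℝ (⊤ : ℕ∞) z)
    (ha : ContDiff ℝ (⊤ : ℕ∞) a) (hb : ContDiff ℝ (⊤ : ℕ∞) b)
    (hunit : ∀ t, a t ^ 2 + b t ^ 2 = 1)
    (hdx : ∀ t, deriv x t = -(β t) * b t)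
    (hdz : ∀ t, deriv z t = β t * a t)
    (hda : ∀ t, deriv a t = -(ℓ t) * b t)
    (hdb : ∀ t, deriv b t = ℓ t * a t)
    (hK : ∀ t, a t * ℓ t = 0) :
    (∀ t : ℝ, ℓ t = 0) ∧
    (∀ t t₀ : ℝ, a t = a t₀ ∧ b t = b t₀) ∧
    (∀ t t₀ : ℝ, (x t - x t₀) * a t₀ + (z t - z t₀) * b t₀ = 0) := by
  have h1 : (1 : WithTop ℕ∞) ≤ ((⊤ : ℕ∞) : WithTop ℕ∞) := by
    exact_mod_cast (le_top : (1 : ℕ∞) ≤ ⊤)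
  have hL : ∀ s, ℓ s = a s * deriv b s - b s * deriv a s := by
    intro s
    rw [hda, hdb]
    have := hunit s
    linear_combination (-ℓ s) * hunit s
  have hcontL : Continuous (fun s => a s * deriv b s - b s * deriv a s) := by
    exact (ha.continuous.mul (hb.continuous_deriv h1)).sub
      (hb.continuous.mul (ha.continuous_deriv h1))
  have hl0 : ∀ t, ℓ t = 0 := by
    intro t
    by_contra hne
    -- near t, ℓ ≠ 0, hence a = 0 near t
    have hLt : (fun s => a s * deriv b s - b s * deriv a s) t ≠ 0 := by
      show a t * deriv b t - b t * deriv a t ≠ 0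
      rw [← hL]; exact hne
    have hnb : ∀ᶠ s in nhds t, (fun s => a s * deriv b s - b s * deriv a s) s ≠ 0 :=
      hcontL.continuousAt.eventually_ne hLt
    have haz : a =ᶠ[nhds t] fun _ => 0 := by
      filter_upwards [hnb] with s hs
      have hls : ℓ s ≠ 0 := by rw [hL]; exact hs
      have := hK s
      rcases mul_eq_zero.mp this with h | h
      · exact h
      · exact absurd h hls
    have hda0 : deriv a t = 0 := by
      rw [haz.deriv_eq]; simp
    have hat : a t = 0 := haz.self_of_nhds
    have hbt : b t ^ 2 = 1 := by have := hunit t; rw [hat] at this; linarith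
    have hbne : b t ≠ 0 := by intro h; rw [h] at hbt; norm_num at hbt
    rw [hda t] at hda0
    rcases mul_eq_zero.mp hda0 with h | h
    · exact hne (by linarith [neg_eq_zero.mp h])
    · exact hbne h
  have hda0 : ∀ s, deriv a s = 0 := fun s => by rw [hda s, hl0 s]; ring
  have hdb0 : ∀ s, deriv b s = 0 := fun s => by rw [hdb s, hl0 s]; ring
  have hadiff : Differentiable ℝ a := ha.differentiable (one_pos.trans_le h1).ne'
  have hbdiff : Differentiable ℝ b := hb.differentiable (one_pos.trans_le h1).ne'
  have haconst : ∀ t t₀ : ℝ, a t = a t₀ := fun t t₀ =>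
    is_const_of_deriv_eq_zero hadiff hda0 t t₀
  have hbconst : ∀ t t₀ : ℝ, b t = b t₀ := fun t t₀ =>
    is_const_of_deriv_eq_zero hbdiff hdb0 t t₀
  refine ⟨hl0, fun t t₀ => ⟨haconst t t₀, hbconst t t₀⟩, ?_⟩
  intro t t₀
  set f : ℝ → ℝ := fun s => (x s - x t₀) * a t₀ + (z s - z t₀) * b t₀ with hf
  have hfdiff : Differentiable ℝ f := by
    apply Differentiable.add
    · exact ((hx.differentiable (one_pos.trans_le h1).ne').sub_const _).mul_const _
    · exact ((hz.differentiable (one_pos.trans_le h1).ne').sub_const _).mul_const _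
  have hfd : ∀ s, deriv f s = 0 := by
    intro s
    have hd1 : HasDerivAt (fun s => (x s - x t₀) * a t₀) (deriv x s * a t₀) s :=
      (((hx.differentiable (one_pos.trans_le h1).ne') s).hasDerivAt.sub_const _).mul_const _
    have hd2 : HasDerivAt (fun s => (z s - z t₀) * b t₀) (deriv z s * b t₀) s :=
      (((hz.differentiable (one_pos.trans_le h1).ne') s).hasDerivAt.sub_const _).mul_const _
    have : deriv (fun s => (x s - x t₀) * a t₀ + (z s - z t₀) * b t₀) s = _ := (hd1.add hd2).deriv
    rw [hf, this, hdx s, hdz s, haconst s t₀, hbconst s t₀]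
    ring
  have : f t = f t₀ := is_const_of_deriv_eq_zero hfdiff hfd t t₀
  have hft0 : f t₀ = 0 := by simp [hf]
  exact this.trans hft0
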